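/- Every infinite backward irreducible sequence of finite frames has an infinite irreducible subsequence. -/

import Mathlib

/-- A Kripke frame: a set of worlds with a binary relation. -/
structure Frame where
  World : Type
  rel : World → World → Prop

/-- `f` is a reduction (surjective p-morphism) of `F` to `G`. -/
def Reduction (F G : Frame) (f : F.World → G.World) : Prop :=
  Function.Surjective f ∧
  (∀ w u, F.rel w u → G.rel (f w) (f u)) ∧
  (∀ w v, G.rel (f w) v → ∃ u, F.rel w u ∧ f u = v)

/-- `F` is reducible to `G`. -/
def Reducible (F G : Frame) : Prop := ∃ f, Reduction F G f

/-- The subframe of `F` generated by the point `w`. -/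
def Frame.genSub (F : Frame) (w : F.World) : Frame :=
  ⟨{v // Relation.ReflTransGen F.rel w v}, fun a b => F.rel a.1 b.1⟩

/-- A sequence of frames is backward irreducible if for all `i < j`, no
point-generated subframe of `F j` is reducible to `F i`. -/
def BackwardIrreducible (F : ℕ → Frame) : Prop :=
  ∀ i j : ℕ, i < j → ∀ w : (F j).World, ¬ Reducible ((F j).genSub w) (F i)

/-- A sequence of frames is irreducible if for all `i ≠ j`, no point-generated
subframe of `F j` is reducible to `F i`. -/
def IrreducibleSeq (F : ℕ → Frame) : Prop :=
  ∀ i j : ℕ, i ≠ j → ∀ w : (F j).World, ¬ Reducible ((F j).genSub w) (F i)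

lemma genSub_reach (F : Frame) (w : F.World) (x : (F.genSub w).World) :
    Relation.ReflTransGen (F.genSub w).rel ⟨w, .refl⟩ x := by
  obtain ⟨v, hv⟩ := x
  induction hv with
  | refl => exact .refl
  | tail h1 h2 ih => exact Relation.ReflTransGen.tail ih h2

lemma key (A B : Frame) (hA : Finite A.World) (hB : Finite B.World) (w : A.World)
    (hcard : Nat.card A.World ≤ Nat.card B.World)
    (hred : Reducible (A.genSub w) B) : ∃ v : B.World, Reducible (B.genSub v) A := by
  obtain ⟨f, hsurj, hforth, hback⟩ := hred
  have hAfin : Finite (A.genSub w).World := by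
    unfold Frame.genSub; exact Subtype.finite
  have hinj : Function.Injective (fun x : (A.genSub w).World => x.1) :=
    fun a b hab => Subtype.ext hab
  have h1 : Nat.card (A.genSub w).World ≤ Nat.card A.World :=
    Nat.card_le_card_of_injective _ hinj
  have h2 : Nat.card B.World ≤ Nat.card (A.genSub w).World :=
    Nat.card_le_card_of_surjective f hsurj
  have hfull : Function.Surjective (fun x : (A.genSub w).World => x.1) :=
    ((Nat.bijective_iff_injective_and_card _).mpr
      ⟨hinj, le_antisymm h1 (hcard.trans h2)⟩).2
  have hfbij : Function.Bijective f :=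
    (Nat.bijective_iff_surjective_and_card f).mpr
      ⟨hsurj, le_antisymm (h1.trans hcard) h2⟩
  let e := Equiv.ofBijective f hfbij
  -- every point of B is reachable from v := f ⟨w, refl⟩
  set w₀ : (A.genSub w).World := ⟨w, .refl⟩ with hw₀
  set v := f w₀ with hv
  have hreachB : ∀ y : B.World, Relation.ReflTransGen B.rel v y := by
    intro y
    obtain ⟨x, rfl⟩ := hsurj y
    exact Relation.ReflTransGen.lift f (fun a b hab => hforth a b hab) _ _ (genSub_reach A w x)
  refine ⟨v, fun x : (B.genSub v).World => (e.symm x.1).1, ?_, ?_, ?_⟩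
  · -- surjective
    intro t
    obtain ⟨x, hx⟩ := hfull t
    refine ⟨⟨f x, hreachB (f x)⟩, ?_⟩
    simp only [Equiv.ofBijective_symm_apply_apply, e]
    exact hx
  · -- forth
    intro x y hxy
    have hx : f (e.symm x.1) = x.1 := e.apply_symm_apply x.1
    have hy : f (e.symm y.1) = y.1 := e.apply_symm_apply y.1
    have : B.rel (f (e.symm x.1)) y.1 := by rw [hx]; exact hxy
    obtain ⟨u, hu, hfu⟩ := hback _ _ this
    have : u = e.symm y.1 := by
      apply hfbij.1; rw [hfu, hy]
    show A.rel (e.symm x.1).1 (e.symm y.1).1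
    rw [← this]
    exact hu
  · -- back
    intro x t ht
    set a := e.symm x.1 with ha
    have hat : Relation.ReflTransGen A.rel w t := Relation.ReflTransGen.tail a.2 ht
    have hrel : A.rel a.1 (⟨t, hat⟩ : (A.genSub w).World).1 := ht
    have hstep : B.rel (f a) (f ⟨t, hat⟩) := hforth _ _ hrel
    have hfa : f a = x.1 := e.apply_symm_apply x.1
    have hreach : Relation.ReflTransGen B.rel v (f ⟨t, hat⟩) :=
      Relation.ReflTransGen.tail x.2 (by rw [← hfa]; exact hstep)
    refine ⟨⟨f ⟨t, hat⟩, hreach⟩, show B.rel x.1 (f ⟨t, hat⟩) by rw [← hfa]; exact hstep, ?_⟩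
    simp only [Equiv.ofBijective_symm_apply_apply, e]
    exact congrArg Subtype.val (Equiv.ofBijective_symm_apply_apply f hfbij _)

/-- Every infinite backward irreducible sequence of finite frames has an
infinite irreducible subsequence. -/
theorem backwardIrreducible_has_irreducible_subsequence (F : ℕ → Frame)
    (hfin : ∀ i, Finite (F i).World) (h : BackwardIrreducible F) :
    ∃ g : ℕ → ℕ, StrictMono g ∧ IrreducibleSeq (fun i => F (g i)) := by
  have hpwo : (Set.univ : Set ℕ).IsPWO :=
    (Set.isWF_univ_iff.mpr ⟨wellFounded_lt⟩).isPWO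
  obtain ⟨g, hg⟩ := hpwo.exists_monotone_subseq (f := fun i => Nat.card (F i).World)
    (fun _ => trivial)
  refine ⟨g, g.strictMono, ?_⟩
  intro i j hij w hred
  rcases lt_or_gt_of_ne hij with hlt | hgt
  · exact h (g i) (g j) (g.strictMono hlt) w hred
  · obtain ⟨v, hv⟩ := key (F (g j)) (F (g i)) (hfin _) (hfin _) w (hg hgt.le) hred
    exact h (g j) (g i) (g.strictMono hgt) v hv
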